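/- Let $G$ be a connected graph of order $n \ge 4$ and let $k \ge 2$ be an integer. Then $\dim_k(G) = n-2$ if and only if $G$ is isomorphic to one of: the complete bipartite graph $K_{s,t}$ with $s, t \ge 1$; the join $K_s + \overline{K_t}$ with $s \ge 1$ and $t \ge 2$; or the join $K_s + (K_1 \cup K_t)$ with $s, t \ge 1$. -/

import Mathlib

open SimpleGraph

/-- The distance-`k` truncated distance `dₖ(x,y) = min{d(x,y), k+1}`, valued in `ℕ∞`
(so unreachable pairs have distance `⊤`, which is truncated to `k+1`). -/
noncomputable def distK {V : Type*} (G : SimpleGraph V) (k : ℕ) (x y : V) : ℕ∞ :=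
  min (G.edist x y) (k + 1)

/-- `S` is a distance-`k` resolving set of `G`. -/
def IsDistKResolving {V : Type*} (G : SimpleGraph V) (k : ℕ) (S : Set V) : Prop :=
  ∀ x y : V, x ≠ y → ∃ z ∈ S, distK G k x z ≠ distK G k y z

/-- The distance-`k` dimension of a finite graph `G`: the minimum cardinality of a
distance-`k` resolving set of `G`. -/
noncomputable def dimK {V : Type*} [Fintype V] (G : SimpleGraph V) (k : ℕ) : ℕ :=
  sInf { m | ∃ S : Finset V, IsDistKResolving G k ↑S ∧ S.card = m }

/-- The join of two graphs: their disjoint union together with all edges between them. -/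
def graphJoin {α β : Type*} (G : SimpleGraph α) (H : SimpleGraph β) :
    SimpleGraph (α ⊕ β) where
  Adj x y := match x, y with
    | Sum.inl a, Sum.inl b => G.Adj a b
    | Sum.inr a, Sum.inr b => H.Adj a b
    | Sum.inl _, Sum.inr _ => True
    | Sum.inr _, Sum.inl _ => True
  symm := ⟨by
    rintro (a | a) (b | b) h
    · exact G.adj_symm h
    · trivial
    · trivial
    · exact H.adj_symm h⟩
  loopless := ⟨by
    rintro (a | a) h
    · exact G.irrefl h
    · exact H.irrefl h⟩

set_option linter.unusedSectionVars false
set_option maxHeartbeats 1600000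

section basics
variable {V : Type*} {G : SimpleGraph V} {k : ℕ} {x y z : V}

lemma distK_self : distK G k x x = 0 := by simp [distK]

lemma distK_pos (h : x ≠ y) : 0 < distK G k x y := by
  simp only [distK, lt_min_iff]
  constructor
  · exact G.edist_pos_of_ne h
  · exact lt_of_lt_of_le zero_lt_one le_add_self

lemma distK_ne_zero (h : x ≠ y) : distK G k x y ≠ 0 := (distK_pos h).ne'

/-- Diameter ≤ 2 condition. -/
def Diam2 {V : Type*} (G : SimpleGraph V) : Prop := ∀ x y : V, x ≠ y → G.edist x y ≤ 2

/-- Condition (A) in adjacency form. -/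
def AdjA {V : Type*} (G : SimpleGraph V) : Prop :=
  ∃ a b z : V, a ≠ b ∧ z ≠ a ∧ z ≠ b ∧ ¬(G.Adj a z ↔ G.Adj b z)

/-- Condition (B) in adjacency form. -/
def AdjB {V : Type*} (G : SimpleGraph V) : Prop :=
  ∀ a b c : V, a ≠ b → a ≠ c → b ≠ c →
    (∀ z, z ≠ a → z ≠ b → z ≠ c → (G.Adj a z ↔ G.Adj b z)) ∨
    (∀ z, z ≠ a → z ≠ b → z ≠ c → (G.Adj a z ↔ G.Adj c z)) ∨
    (∀ z, z ≠ a → z ≠ b → z ≠ c → (G.Adj b z ↔ G.Adj c z))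

lemma distK_eq_one_of_adj (h : G.Adj x z) : distK G k x z = 1 := by
  have h1 : G.edist x z = 1 := edist_eq_one_iff_adj.mpr h
  have : (1 : ℕ∞) ≤ (k : ℕ∞) + 1 := le_add_self
  simp [distK, h1, this]

lemma distK_eq_two_of_not_adj (hd : Diam2 G) (hk : 2 ≤ k) (hne : x ≠ z) (h : ¬ G.Adj x z) :
    distK G k x z = 2 := by
  have h2 : G.edist x z ≤ 2 := hd x z hne
  have h0 : G.edist x z ≠ 0 := by simp [hne]
  have h1 : G.edist x z ≠ 1 := by simp [h]
  have htop : G.edist x z ≠ ⊤ := by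
    intro ht; rw [ht] at h2; simp at h2
  lift G.edist x z to ℕ using htop with m hm
  rw [distK, ← hm]
  have hm2 : m = 2 := by
    have : m ≤ 2 := by exact_mod_cast h2
    have : m ≠ 0 := by exact_mod_cast h0
    have : m ≠ 1 := by exact_mod_cast h1
    omega
  subst hm2
  have : (2 : ℕ∞) ≤ (k : ℕ∞) + 1 := by
    have : ((2:ℕ) : ℕ∞) ≤ ((k+1 : ℕ) : ℕ∞) := by exact_mod_cast (by omega : 2 ≤ k + 1)
    simpa using this
  simpa using min_eq_left this

lemma distK_ne_iff (hd : Diam2 G) (hk : 2 ≤ k) (hzx : z ≠ x) (hzy : z ≠ y) :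
    distK G k x z ≠ distK G k y z ↔ ¬(G.Adj x z ↔ G.Adj y z) := by
  by_cases hx : G.Adj x z <;> by_cases hy : G.Adj y z
  · simp [distK_eq_one_of_adj hx, distK_eq_one_of_adj hy, hx, hy]
  · rw [distK_eq_one_of_adj hx, distK_eq_two_of_not_adj hd hk (Ne.symm hzy) hy]
    simp [hx, hy]
  · rw [distK_eq_two_of_not_adj hd hk (Ne.symm hzx) hx, distK_eq_one_of_adj hy]
    simp [hx, hy]
  · rw [distK_eq_two_of_not_adj hd hk (Ne.symm hzx) hx,
      distK_eq_two_of_not_adj hd hk (Ne.symm hzy) hy]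
    simp [hx, hy]

end basics

section master
variable {V : Type*} [Fintype V] {G : SimpleGraph V} {k n : ℕ}

/-- dk-form of condition A -/
def DkA (G : SimpleGraph V) (k : ℕ) : Prop :=
  ∃ a b : V, a ≠ b ∧ ∃ z, z ≠ a ∧ z ≠ b ∧ distK G k a z ≠ distK G k b z

/-- dk-form of condition B -/
def DkB (G : SimpleGraph V) (k : ℕ) : Prop :=
  ∀ a b c : V, a ≠ b → a ≠ c → b ≠ c →
    (∀ z, z ≠ a → z ≠ b → z ≠ c → distK G k a z = distK G k b z) ∨
    (∀ z, z ≠ a → z ≠ b → z ≠ c → distK G k a z = distK G k c z) ∨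
    (∀ z, z ≠ a → z ≠ b → z ≠ c → distK G k b z = distK G k c z)

lemma resolving_of_pairs {S : Finset V}
    (h : ∀ x y : V, x ∉ S → y ∉ S → x ≠ y → ∃ z ∈ S, distK G k x z ≠ distK G k y z) :
    IsDistKResolving G k ↑S := by
  intro x y hxy
  by_cases hx : x ∈ S
  · exact ⟨x, by simpa using hx, by rw [distK_self]; exact (distK_ne_zero (Ne.symm hxy)).symm⟩
  by_cases hy : y ∈ S
  · exact ⟨y, by simpa using hy, by rw [distK_self]; exact distK_ne_zero hxy⟩
  obtain ⟨z, hz, hne⟩ := h x y hx hy hxy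
  exact ⟨z, by simpa using hz, hne⟩

lemma mem_dimset_iff_dkA (hn : Fintype.card V = n) (h4 : 4 ≤ n) :
    (n - 2) ∈ { m | ∃ S : Finset V, IsDistKResolving G k ↑S ∧ S.card = m } ↔ DkA G k := by
  classical
  constructor
  · rintro ⟨S, hS, hcard⟩
    have hc : Sᶜ.card = 2 := by rw [Finset.card_compl, hcard, hn]; omega
    obtain ⟨a, b, hab, hS2⟩ := Finset.card_eq_two.mp hc
    have haS : a ∉ S := by
      have : a ∈ Sᶜ := hS2 ▸ (by simp)
      simpa using this
    have hbS : b ∉ S := by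
      have : b ∈ Sᶜ := hS2 ▸ (by simp)
      simpa using this
    obtain ⟨z, hz, hne⟩ := hS a b hab
    have hzS : z ∈ S := by simpa using hz
    refine ⟨a, b, hab, z, ?_, ?_, hne⟩
    · rintro rfl; exact haS hzS
    · rintro rfl; exact hbS hzS
  · rintro ⟨a, b, hab, z, hza, hzb, hne⟩
    refine ⟨({a, b} : Finset V)ᶜ, ?_, ?_⟩
    · apply resolving_of_pairs
      intro x y hx hy hxy
      simp only [Finset.mem_compl, not_not, Finset.mem_insert, Finset.mem_singleton] at hx hy
      have hz' : z ∈ ({a, b} : Finset V)ᶜ := by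
        simp [Finset.mem_compl, hza, hzb]
      rcases hx with rfl | rfl <;> rcases hy with rfl | rfl
      · exact absurd rfl hxy
      · exact ⟨z, hz', hne⟩
      · exact ⟨z, hz', hne.symm⟩
      · exact absurd rfl hxy
    · rw [Finset.card_compl, Finset.card_pair hab, hn]

lemma mem_dimset_iff_not_dkB (hn : Fintype.card V = n) (h4 : 4 ≤ n) :
    (n - 3) ∈ { m | ∃ S : Finset V, IsDistKResolving G k ↑S ∧ S.card = m } ↔ ¬ DkB G k := by
  classical
  constructor
  · rintro ⟨S, hS, hcard⟩ hB
    have hc : Sᶜ.card = 3 := by rw [Finset.card_compl, hcard, hn]; omega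
    obtain ⟨a, b, c, hab, hac, hbc, hS3⟩ := Finset.card_eq_three.mp hc
    have hmem : ∀ x, x ∈ S ↔ (x ≠ a ∧ x ≠ b ∧ x ≠ c) := by
      intro x
      constructor
      · intro hx
        have : x ∉ Sᶜ := by simp [hx]
        rw [hS3] at this; simp at this; tauto
      · intro hx
        by_contra hxS
        have : x ∈ Sᶜ := by simp [hxS]
        rw [hS3] at this; simp at this; tauto
    rcases hB a b c hab hac hbc with h | h | h
    · obtain ⟨z, hz, hne⟩ := hS a b hab
      have := hmem z |>.mp (by simpa using hz)
      exact hne (h z this.1 this.2.1 this.2.2)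
    · obtain ⟨z, hz, hne⟩ := hS a c hac
      have := hmem z |>.mp (by simpa using hz)
      exact hne (h z this.1 this.2.1 this.2.2)
    · obtain ⟨z, hz, hne⟩ := hS b c hbc
      have := hmem z |>.mp (by simpa using hz)
      exact hne (h z this.1 this.2.1 this.2.2)
  · intro hB
    rw [DkB] at hB
    push_neg at hB
    obtain ⟨a, b, c, hab, hac, hbc, h1, h2, h3⟩ := hB
    obtain ⟨z1, hz1a, hz1b, hz1c, hne1⟩ := h1
    obtain ⟨z2, hz2a, hz2b, hz2c, hne2⟩ := h2
    obtain ⟨z3, hz3a, hz3b, hz3c, hne3⟩ := h3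
    refine ⟨({a, b, c} : Finset V)ᶜ, ?_, ?_⟩
    · apply resolving_of_pairs
      intro x y hx hy hxy
      simp only [Finset.mem_compl, not_not, Finset.mem_insert, Finset.mem_singleton] at hx hy
      have m1 : z1 ∈ ({a, b, c} : Finset V)ᶜ := by simp [hz1a, hz1b, hz1c]
      have m2 : z2 ∈ ({a, b, c} : Finset V)ᶜ := by simp [hz2a, hz2b, hz2c]
      have m3 : z3 ∈ ({a, b, c} : Finset V)ᶜ := by simp [hz3a, hz3b, hz3c]
      rcases hx with rfl | rfl | rfl <;> rcases hy with rfl | rfl | rfl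
      · exact absurd rfl hxy
      · exact ⟨z1, m1, hne1⟩
      · exact ⟨z2, m2, hne2⟩
      · exact ⟨z1, m1, hne1.symm⟩
      · exact absurd rfl hxy
      · exact ⟨z3, m3, hne3⟩
      · exact ⟨z2, m2, hne2.symm⟩
      · exact ⟨z3, m3, hne3.symm⟩
      · exact absurd rfl hxy
    · rw [Finset.card_compl, hn]
      have : ({a, b, c} : Finset V).card = 3 := by
        rw [Finset.card_insert_of_notMem (by simp [hab, hac]),
          Finset.card_pair hbc]
      rw [this]

lemma dimK_eq_iff (hn : Fintype.card V = n) (h4 : 4 ≤ n) :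
    dimK G k = n - 2 ↔ DkA G k ∧ DkB G k := by
  classical
  set M := { m | ∃ S : Finset V, IsDistKResolving G k ↑S ∧ S.card = m } with hM
  have huniv : Fintype.card V ∈ M := by
    refine ⟨Finset.univ, ?_, by simp⟩
    apply resolving_of_pairs
    intro x y hx
    simp at hx
  have hups : ∀ m m', m ∈ M → m ≤ m' → m' ≤ Fintype.card V → m' ∈ M := by
    rintro m m' ⟨S, hS, rfl⟩ hle hle'
    obtain ⟨T, hST, hT⟩ := Finset.exists_superset_card_eq hle hle'
    refine ⟨T, ?_, hT⟩
    intro x y hxy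
    obtain ⟨z, hz, hne⟩ := hS x y hxy
    exact ⟨z, by simp only [Finset.mem_coe] at hz ⊢; exact hST hz, hne⟩
  have hne : M.Nonempty := ⟨_, huniv⟩
  rw [dimK, ← hM]
  constructor
  · intro h
    have hmem : n - 2 ∈ M := h ▸ Nat.sInf_mem hne
    have hnB : ¬ (n - 3) ∈ M := by
      intro hc
      have := Nat.sInf_le hc
      omega
    exact ⟨(mem_dimset_iff_dkA hn h4).mp hmem,
      not_not.mp (fun hB => hnB ((mem_dimset_iff_not_dkB hn h4).mpr hB))⟩
  · rintro ⟨hA, hB⟩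
    have hmem : n - 2 ∈ M := (mem_dimset_iff_dkA hn h4).mpr hA
    have hnB : (n - 3) ∉ M := fun hc => (mem_dimset_iff_not_dkB hn h4).mp hc hB
    have hle : sInf M ≤ n - 2 := Nat.sInf_le hmem
    have hge : ¬ sInf M < n - 2 := by
      intro hlt
      have hsm : sInf M ∈ M := Nat.sInf_mem hne
      have : n - 3 ∈ M := hups _ _ hsm (by omega) (by omega)
      exact hnB this
    omega

end master

section diam
variable {V : Type*} {G : SimpleGraph V} {k : ℕ}

lemma exists_adj_edist_step {m : ℕ} {u v : V} (h : G.edist u v = (m + 1 : ℕ)) :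
    ∃ w, G.Adj u w ∧ G.edist w v = m := by
  obtain ⟨p, hp⟩ := SimpleGraph.exists_walk_of_edist_eq_coe h
  cases p with
  | nil => simp at hp
  | @cons _ w _ hadj q =>
    refine ⟨w, hadj, ?_⟩
    have h1 : G.edist w v ≤ m := by
      have := SimpleGraph.edist_le q
      simp only [SimpleGraph.Walk.length_cons] at hp
      rw [show q.length = m by omega] at this
      exact this
    have h2 : (m : ℕ∞) ≤ G.edist w v := by
      have htri : G.edist u v ≤ G.edist u w + G.edist w v := SimpleGraph.edist_triangle
      rw [h, SimpleGraph.edist_eq_one_iff_adj.mpr hadj] at htri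
      have hne : G.edist w v ≠ ⊤ := by
        intro ht; rw [ht] at h1; simp at h1
      lift G.edist w v to ℕ using hne with e he
      rw [show ((1 : ℕ∞) + e) = ((1 + e : ℕ) : ℕ∞) by push_cast; ring] at htri
      have : m + 1 ≤ 1 + e := by exact_mod_cast htri
      exact_mod_cast (by omega : m ≤ e)
    exact le_antisymm h1 h2

lemma distK_coe_eq (hk : 2 ≤ k) {x z : V} {i : ℕ} (hi : i ≤ 3) (h : G.edist x z = (i : ℕ)) :
    distK G k x z = (i : ℕ) := by
  rw [distK, h]
  refine min_eq_left ?_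
  rw [show ((k : ℕ∞) + 1) = ((k + 1 : ℕ) : ℕ∞) by push_cast; ring]
  exact_mod_cast (by omega : i ≤ k + 1)

lemma diam2_of_dkB (hG : G.Connected) (hk : 2 ≤ k) (hB : DkB G k) : Diam2 G := by
  intro a b hab
  by_contra hgt
  push_neg at hgt
  have hne : G.edist a b ≠ ⊤ := SimpleGraph.edist_ne_top_iff_reachable.mpr (hG a b)
  lift G.edist a b to ℕ using hne with m hm
  have hm3 : 3 ≤ m := by
    have : (2 : ℕ∞) < (m : ℕ) := hgt
    exact_mod_cast (by exact_mod_cast this : (2:ℕ) < m)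
  obtain ⟨y1, ha1, h1⟩ := exists_adj_edist_step (show G.edist a b = ((m - 1) + 1 : ℕ) by
    rw [← hm]; congr 1; omega)
  obtain ⟨y2, ha2, h2⟩ := exists_adj_edist_step (show G.edist y1 b = ((m - 2) + 1 : ℕ) by
    rw [h1]; congr 1; omega)
  obtain ⟨y3, ha3, h3⟩ := exists_adj_edist_step (show G.edist y2 b = ((m - 3) + 1 : ℕ) by
    rw [h2]; congr 1; omega)
  -- distances from a
  have e1 : G.edist a y1 = (1 : ℕ) := by
    rw [show ((1:ℕ) : ℕ∞) = 1 by norm_cast]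
    exact SimpleGraph.edist_eq_one_iff_adj.mpr ha1
  have upper : ∀ (x y : V) (i j : ℕ), G.edist a x = (i:ℕ) → G.Adj x y → i + 1 = j →
      G.edist a y ≤ (j : ℕ) := by
    intro x y i j hx hxy hij
    have := SimpleGraph.edist_triangle (G := G) (u := a) (v := x) (w := y)
    rw [hx, SimpleGraph.edist_eq_one_iff_adj.mpr hxy] at this
    calc G.edist a y ≤ (i : ℕ) + 1 := this
    _ = (j : ℕ) := by rw [show j = i + 1 by omega]; push_cast; ring
  have lower : ∀ (y : V) (i : ℕ), i ≤ m → G.edist y b = ((m - i) : ℕ) → (i:ℕ∞) ≤ G.edist a y := by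
    intro y i him hyb
    have htri := SimpleGraph.edist_triangle (G := G) (u := a) (v := y) (w := b)
    rw [hyb, ← hm] at htri
    have hnetop : G.edist a y ≠ ⊤ := SimpleGraph.edist_ne_top_iff_reachable.mpr (hG a y)
    lift G.edist a y to ℕ using hnetop with e he
    rw [show ((e : ℕ∞) + ((m - i : ℕ) : ℕ∞)) = ((e + (m - i) : ℕ) : ℕ∞) by push_cast; ring] at htri
    have : m ≤ e + (m - i) := by exact_mod_cast htri
    exact_mod_cast (by omega : i ≤ e)
  have e2 : G.edist a y2 = (2 : ℕ) := by
    refine le_antisymm (upper y1 y2 1 2 e1 ha2 rfl) (lower y2 2 (by omega) (by rw [h2]))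
  have e3 : G.edist a y3 = (3 : ℕ) := by
    refine le_antisymm (upper y2 y3 2 3 e2 ha3 rfl) (lower y3 3 (by omega) (by rw [h3]))
  -- the three vertices are distinct and distinct from a
  have d12 : y1 ≠ y2 := fun h => by
    rw [h, e2] at e1; exact absurd (Nat.cast_inj.mp e1) (by omega)
  have d13 : y1 ≠ y3 := fun h => by
    rw [h, e3] at e1; exact absurd (Nat.cast_inj.mp e1) (by omega)
  have d23 : y2 ≠ y3 := fun h => by
    rw [h, e3] at e2; exact absurd (Nat.cast_inj.mp e2) (by omega)
  have da1 : a ≠ y1 := fun h => by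
    rw [← h] at e1; rw [SimpleGraph.edist_self (G := G)] at e1
    norm_num at e1
  have da2 : a ≠ y2 := fun h => by
    rw [← h] at e2; rw [SimpleGraph.edist_self (G := G)] at e2
    norm_num at e2
  have da3 : a ≠ y3 := fun h => by
    rw [← h] at e3; rw [SimpleGraph.edist_self (G := G)] at e3
    norm_num at e3
  have k1 : distK G k y1 a = (1 : ℕ) := distK_coe_eq hk (by omega) (by rw [SimpleGraph.edist_comm]; exact e1)
  have k2 : distK G k y2 a = (2 : ℕ) := distK_coe_eq hk (by omega) (by rw [SimpleGraph.edist_comm]; exact e2)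
  have k3 : distK G k y3 a = (3 : ℕ) := distK_coe_eq hk (by omega) (by rw [SimpleGraph.edist_comm]; exact e3)
  rcases hB y1 y2 y3 d12 d13 d23 with h | h | h
  · have := h a da1 da2 da3
    rw [k1, k2] at this; exact absurd (Nat.cast_inj.mp this) (by omega)
  · have := h a da1 da2 da3
    rw [k1, k3] at this; exact absurd (Nat.cast_inj.mp this) (by omega)
  · have := h a da1 da2 da3
    rw [k2, k3] at this; exact absurd (Nat.cast_inj.mp this) (by omega)

lemma dkA_iff_adjA (hd : Diam2 G) (hk : 2 ≤ k) : DkA G k ↔ AdjA G := by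
  constructor
  · rintro ⟨a, b, hab, z, hza, hzb, hne⟩
    exact ⟨a, b, z, hab, hza, hzb, (distK_ne_iff hd hk hza hzb).mp hne⟩
  · rintro ⟨a, b, z, hab, hza, hzb, hne⟩
    exact ⟨a, b, hab, z, hza, hzb, (distK_ne_iff hd hk hza hzb).mpr hne⟩

lemma dkB_iff_adjB (hd : Diam2 G) (hk : 2 ≤ k) : DkB G k ↔ AdjB G := by
  have key : ∀ x y z : V, z ≠ x → z ≠ y →
      (distK G k x z = distK G k y z ↔ (G.Adj x z ↔ G.Adj y z)) := by
    intro x y z hzx hzy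
    rw [← not_ne_iff (a := distK G k x z), distK_ne_iff hd hk hzx hzy, not_not]
  constructor <;> intro h a b c hab hac hbc <;> rcases h a b c hab hac hbc with h' | h' | h'
  · exact Or.inl fun z h1 h2 h3 => (key a b z h1 h2).mp (h' z h1 h2 h3)
  · exact Or.inr (Or.inl fun z h1 h2 h3 => (key a c z h1 h3).mp (h' z h1 h2 h3))
  · exact Or.inr (Or.inr fun z h1 h2 h3 => (key b c z h2 h3).mp (h' z h1 h2 h3))
  · exact Or.inl fun z h1 h2 h3 => (key a b z h1 h2).mpr (h' z h1 h2 h3)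
  · exact Or.inr (Or.inl fun z h1 h2 h3 => (key a c z h1 h3).mpr (h' z h1 h2 h3))
  · exact Or.inr (Or.inr fun z h1 h2 h3 => (key b c z h2 h3).mpr (h' z h1 h2 h3))

/-- The master reformulation. -/
lemma dimK_eq_iff' [Fintype V] {n : ℕ} (hG : G.Connected) (hn : Fintype.card V = n)
    (h4 : 4 ≤ n) (hk : 2 ≤ k) :
    dimK G k = n - 2 ↔ Diam2 G ∧ AdjA G ∧ AdjB G := by
  rw [dimK_eq_iff hn h4]
  constructor
  · rintro ⟨hA, hB⟩
    have hd : Diam2 G := diam2_of_dkB hG hk hB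
    exact ⟨hd, (dkA_iff_adjA hd hk).mp hA, (dkB_iff_adjB hd hk).mp hB⟩
  · rintro ⟨hd, hA, hB⟩
    exact ⟨(dkA_iff_adjA hd hk).mpr hA, (dkB_iff_adjB hd hk).mpr hB⟩

end diam

section twins
variable {V : Type*} {G : SimpleGraph V}

/-- Twin vertices: indistinguishable by adjacency from all other vertices. -/
def Twin (G : SimpleGraph V) (x y : V) : Prop :=
  ∀ z, z ≠ x → z ≠ y → (G.Adj x z ↔ G.Adj y z)

lemma Twin.refl (x : V) : Twin G x x := fun _ _ _ => Iff.rfl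

lemma Twin.symm {x y : V} (h : Twin G x y) : Twin G y x :=
  fun z hzy hzx => (h z hzx hzy).symm

lemma Twin.trans {x y z : V} (hxy : Twin G x y) (hyz : Twin G y z) : Twin G x z := by
  rcases eq_or_ne x y with rfl | hxyne
  · exact hyz
  rcases eq_or_ne y z with rfl | hyzne
  · exact hxy
  rcases eq_or_ne x z with rfl | hxzne
  · exact Twin.refl x
  intro w hwx hwz
  rcases eq_or_ne w y with rfl | hwy
  · calc G.Adj x w ↔ G.Adj w x := G.adj_comm x w
      _ ↔ G.Adj z x := hyz x hxyne hxzne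
      _ ↔ G.Adj x z := G.adj_comm z x
      _ ↔ G.Adj w z := hxy z (Ne.symm hxzne) (Ne.symm hyzne)
      _ ↔ G.Adj z w := G.adj_comm w z
  · exact (hxy w hwx hwy).trans (hyz w hwy hwz)

lemma common_neighbor (hd : Diam2 G) {x y : V} (hxy : x ≠ y) (hna : ¬ G.Adj x y) :
    ∃ w, G.Adj x w ∧ G.Adj w y := by
  have h2 : G.edist x y ≤ 2 := hd x y hxy
  have htop : G.edist x y ≠ ⊤ := by intro ht; rw [ht] at h2; simp at h2
  lift G.edist x y to ℕ using htop with m hm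
  have h0 : m ≠ 0 := by
    intro h; subst h; exact hxy (SimpleGraph.edist_eq_zero_iff.mp (by exact_mod_cast hm.symm))
  have h1 : m ≠ 1 := by
    intro h; subst h
    exact hna (SimpleGraph.edist_eq_one_iff_adj.mp (by exact_mod_cast hm.symm))
  have hm2 : m = 2 := by
    have : m ≤ 2 := by exact_mod_cast h2
    omega
  subst hm2
  obtain ⟨p, hp⟩ := SimpleGraph.exists_walk_of_edist_eq_coe hm.symm
  cases p with
  | nil => simp at hp
  | @cons _ w _ hadj q =>
    refine ⟨w, hadj, ?_⟩
    have : q.length = 1 := by simp at hp; omega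
    exact q.adj_of_length_eq_one this

lemma exists_neighbor (hG : G.Connected) {x y : V} (hxy : x ≠ y) : ∃ w, G.Adj x w := by
  obtain ⟨p⟩ := hG x y
  cases p with
  | nil => exact absurd rfl hxy
  | cons h q => exact ⟨_, h⟩

lemma exists_cross_edge (hG : G.Connected) {A : Set V} {a b : V} (ha : a ∈ A) (hb : b ∉ A) :
    ∃ x ∈ A, ∃ y ∉ A, G.Adj x y := by
  obtain ⟨p⟩ := hG a b
  induction p with
  | nil => exact absurd ha hb
  | @cons u w v h q ih =>
    by_cases hw : w ∈ A
    · exact ih hw hb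
    · exact ⟨u, ha, w, hw, h⟩

end twins

section classify
variable {V : Type*} {G : SimpleGraph V}

def IsIndepOn (G : SimpleGraph V) (A : Set V) : Prop := ∀ x ∈ A, ∀ y ∈ A, x ≠ y → ¬ G.Adj x y
def IsCliqueOn (G : SimpleGraph V) (A : Set V) : Prop := ∀ x ∈ A, ∀ y ∈ A, x ≠ y → G.Adj x y
def CrossAll (G : SimpleGraph V) (A : Set V) : Prop := ∀ x ∈ A, ∀ y ∈ Aᶜ, G.Adj x y

def P1 (G : SimpleGraph V) : Prop :=
  ∃ A : Set V, A.Nonempty ∧ Aᶜ.Nonempty ∧ IsIndepOn G A ∧ IsIndepOn G Aᶜ ∧ CrossAll G A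

def P2 (G : SimpleGraph V) : Prop :=
  ∃ A : Set V, A.Nonempty ∧ (∃ y1 ∈ Aᶜ, ∃ y2 ∈ Aᶜ, y1 ≠ y2) ∧
    IsCliqueOn G A ∧ IsIndepOn G Aᶜ ∧ CrossAll G A

def P3 (G : SimpleGraph V) : Prop :=
  ∃ (u : V) (A : Set V), u ∉ A ∧ A.Nonempty ∧ ((insert u A)ᶜ).Nonempty ∧
    (∀ x ∈ A, ∀ y, y ≠ x → G.Adj x y) ∧ IsCliqueOn G ((insert u A)ᶜ) ∧
    (∀ y ∈ (insert u A)ᶜ, ¬ G.Adj u y)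

lemma key_lemma (hG : G.Connected) (hd : Diam2 G) (hB : AdjB G) {a b c : V}
    (hab : a ≠ b) (hac : a ≠ c) (hbc : b ≠ c)
    (htac : ¬ Twin G a c)
    (hpin : ∀ z, z ≠ a → z ≠ b → z ≠ c → (G.Adj a z ↔ G.Adj b z))
    (hca : G.Adj a c) (hcb : ¬ G.Adj b c) : P3 G := by
  by_cases hab' : G.Adj a b
  · -- main branch: structure is K_s + (K_1 ∪ K_t)
    have S1 : ∀ z, z ≠ a → z ≠ b → z ≠ c → G.Adj z c →
        ∀ w, w ≠ a → w ≠ b → w ≠ z → (G.Adj a w ↔ G.Adj z w) := by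
      intro z hza hzb hzc hzadj
      rcases hB a b z hab (Ne.symm hza) (Ne.symm hzb) with h | h | h
      · exact absurd ((h c (Ne.symm hac) (Ne.symm hbc) (Ne.symm hzc)).mp hca) hcb
      · exact h
      · exact absurd ((h c (Ne.symm hac) (Ne.symm hbc) (Ne.symm hzc)).mpr hzadj) hcb
    have T1 : ∀ z, z ≠ a → z ≠ b → z ≠ c → ¬ G.Adj z c →
        ∀ w, w ≠ a → w ≠ b → w ≠ z → (G.Adj b w ↔ G.Adj z w) := by
      intro z hza hzb hzc hzadj
      rcases hB a b z hab (Ne.symm hza) (Ne.symm hzb) with h | h | h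
      · exact absurd ((h c (Ne.symm hac) (Ne.symm hbc) (Ne.symm hzc)).mp hca) hcb
      · exact absurd ((h c (Ne.symm hac) (Ne.symm hbc) (Ne.symm hzc)).mp hca) hzadj
      · exact h
    -- Step 2: non-neighbors of c are adjacent to b
    have step2 : ∀ y, y ≠ a → y ≠ b → y ≠ c → ¬ G.Adj y c → G.Adj b y := by
      intro y hya hyb hyc hyadj
      by_contra hby
      have hay : ¬ G.Adj a y := fun h => hby ((hpin y hya hyb hyc).mp h)
      have hiso : ∀ w, ¬ G.Adj y w := by
        intro w
        by_cases hwy : w = y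
        · subst hwy; exact G.irrefl
        by_cases hwa : w = a
        · subst hwa; exact fun h => hay h.symm
        by_cases hwb : w = b
        · subst hwb; exact fun h => hby h.symm
        by_cases hwc : w = c
        · subst hwc; exact hyadj
        by_cases hwadj : G.Adj w c
        · exact fun h => hay ((S1 w hwa hwb hwc hwadj y hya hyb (Ne.symm hwy)).mpr h.symm)
        · exact fun h => hby ((T1 w hwa hwb hwc hwadj y hya hyb (Ne.symm hwy)).mpr h.symm)
      obtain ⟨w, hw⟩ := exists_neighbor hG hya
      exact hiso w hw
    have step3 : ∀ y, y ≠ a → y ≠ b → y ≠ c → ¬ G.Adj y c → G.Adj a y := by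
      intro y hya hyb hyc hyadj
      exact (hpin y hya hyb hyc).mpr (step2 y hya hyb hyc hyadj)
    -- Step 4: neighbors of c are adjacent to a and b
    have step4 : ∀ x, x ≠ a → x ≠ b → x ≠ c → G.Adj x c → G.Adj a x ∧ G.Adj b x := by
      intro x hxa hxb hxc hxadj
      by_contra hcon
      have hax : ¬ G.Adj a x := by
        intro h
        exact hcon ⟨h, (hpin x hxa hxb hxc).mp h⟩
      have hbx : ¬ G.Adj b x := fun h => hax ((hpin x hxa hxb hxc).mpr h)
      have H3 : ∀ w, w ≠ a → w ≠ c → w ≠ x → (G.Adj c w ↔ G.Adj x w) := by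
        rcases hB a c x hac (Ne.symm hxa) (Ne.symm hxc) with h | h | h
        · exact absurd (((h b (Ne.symm hab) hbc (Ne.symm hxb)).mp hab').symm) hcb
        · exact absurd ((h b (Ne.symm hab) hbc (Ne.symm hxb)).mp hab')
            (fun h' => hbx h'.symm)
        · exact h
      have Tempty : ∀ y, y ≠ a → y ≠ b → y ≠ c → G.Adj y c := by
        intro y hya hyb hyc
        by_contra hyadj
        have hyx : y ≠ x := by rintro rfl; exact hyadj hxadj
        have h1 : G.Adj x y :=
          (S1 x hxa hxb hxc hxadj y hya hyb hyx).mp (step3 y hya hyb hyc hyadj)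
        exact hyadj (((H3 y hya hyc hyx).mpr h1).symm)
      obtain ⟨w, hxw, hwb⟩ := common_neighbor hd (show x ≠ b from hxb) (fun h => hbx h.symm)
      have hwc : w ≠ c := by rintro rfl; exact hcb hwb.symm
      have hwa : w ≠ a := by rintro rfl; exact hax hxw.symm
      have hwb' : w ≠ b := hwb.ne
      have hwx : w ≠ x := hxw.ne'
      have hwadjc : G.Adj w c := Tempty w hwa hwb' hwc
      have hawadj : G.Adj a w := (hpin w hwa hwb' hwc).mpr hwb.symm
      rcases hB b x w (Ne.symm hxb) (Ne.symm hwb') (Ne.symm hwx) with h | h | h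
      · exact hax ((h a hab (Ne.symm hxa) (Ne.symm hwa)).mp hab'.symm).symm
      · exact hcb ((h c (Ne.symm hbc) (Ne.symm hxc) (Ne.symm hwc)).mpr hwadjc)
      · exact hax ((h a hab (Ne.symm hxa) (Ne.symm hwa)).mpr hawadj.symm).symm
    -- adjacency of a to everything
    have haAll : ∀ y, y ≠ a → G.Adj a y := by
      intro y hya
      by_cases hyb : y = b
      · subst hyb; exact hab'
      by_cases hyc : y = c
      · subst hyc; exact hca
      by_cases hyadj : G.Adj y c
      · exact (step4 y hya hyb hyc hyadj).1
      · exact step3 y hya hyb hyc hyadj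
    -- the partition
    refine ⟨c, {x | x = a ∨ (x ≠ a ∧ x ≠ b ∧ x ≠ c ∧ G.Adj x c)}, ?_, ⟨a, Or.inl rfl⟩,
      ?_, ?_, ?_, ?_⟩
    · -- c ∉ A
      rintro (rfl | ⟨-, -, hcc, -⟩)
      · exact hac rfl
      · exact hcc rfl
    · -- complement nonempty : b
      refine ⟨b, fun hmem => ?_⟩
      rcases Set.mem_insert_iff.mp hmem with h | hmem'
      · exact hbc h
      · rcases hmem' with h | ⟨-, hbb, -⟩
        · exact hab h.symm
        · exact hbb rfl
    · -- A is dominating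
      rintro x (rfl | ⟨hxa, hxb, hxc, hxadj⟩) y hyx
      · exact haAll y hyx
      · by_cases hya : y = a
        · subst hya; exact ((step4 x hxa hxb hxc hxadj).1).symm
        by_cases hyb : y = b
        · subst hyb; exact ((step4 x hxa hxb hxc hxadj).2).symm
        by_cases hyc : y = c
        · subst hyc; exact hxadj
        · exact (S1 x hxa hxb hxc hxadj y hya hyb hyx).mp (haAll y hya)
    · -- complement is a clique
      have cmem : ∀ y, y ∈ (insert c {x | x = a ∨ (x ≠ a ∧ x ≠ b ∧ x ≠ c ∧ G.Adj x c)})ᶜ →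
          (y = b ∨ (y ≠ a ∧ y ≠ b ∧ y ≠ c ∧ ¬ G.Adj y c)) := by
        intro y hy
        by_cases hyb : y = b
        · exact Or.inl hyb
        have hyc : y ≠ c := by rintro rfl; exact hy (Set.mem_insert _ _)
        have hyA : y ∉ {x | x = a ∨ (x ≠ a ∧ x ≠ b ∧ x ≠ c ∧ G.Adj x c)} :=
          fun h => hy (Set.mem_insert_of_mem _ h)
        have hya : y ≠ a := fun h => hyA (Or.inl h)
        exact Or.inr ⟨hya, hyb, hyc, fun hadj => hyA (Or.inr ⟨hya, hyb, hyc, hadj⟩)⟩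
      intro x hx y hy hxy
      rcases cmem x hx with h | ⟨hxa, hxb, hxc, hxadj⟩ <;>
        rcases cmem y hy with h' | ⟨hya, hyb, hyc, hyadj⟩
      · exact absurd (h.trans h'.symm) hxy
      · subst h; exact step2 y hya hyb hyc hyadj
      · subst h'; exact (step2 x hxa hxb hxc hxadj).symm
      · exact (T1 x hxa hxb hxc hxadj y hya hyb (Ne.symm hxy)).mp
          (step2 y hya hyb hyc hyadj)
    · -- u = c not adjacent to complement
      have cmem : ∀ y, y ∈ (insert c {x | x = a ∨ (x ≠ a ∧ x ≠ b ∧ x ≠ c ∧ G.Adj x c)})ᶜ →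
          (y = b ∨ (y ≠ a ∧ y ≠ b ∧ y ≠ c ∧ ¬ G.Adj y c)) := by
        intro y hy
        by_cases hyb : y = b
        · exact Or.inl hyb
        have hyc : y ≠ c := by rintro rfl; exact hy (Set.mem_insert _ _)
        have hyA : y ∉ {x | x = a ∨ (x ≠ a ∧ x ≠ b ∧ x ≠ c ∧ G.Adj x c)} :=
          fun h => hy (Set.mem_insert_of_mem _ h)
        have hya : y ≠ a := fun h => hyA (Or.inl h)
        exact Or.inr ⟨hya, hyb, hyc, fun hadj => hyA (Or.inr ⟨hya, hyb, hyc, hadj⟩)⟩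
      intro y hy
      rcases cmem y hy with h | ⟨hya, hyb, hyc, hyadj⟩
      · subst h; exact fun h' => hcb h'.symm
      · exact fun h' => hyadj h'.symm
  · -- branch ¬ Adj a b : contradiction
    exfalso
    obtain ⟨w, haw, hwb⟩ := common_neighbor hd hab hab'
    have hwc : w ≠ c := by rintro rfl; exact hcb hwb.symm
    have hwa : w ≠ a := haw.ne'
    have hwb' : w ≠ b := hwb.ne
    rcases hB a b w hab (Ne.symm hwa) (Ne.symm hwb') with h | h | h
    · exact hcb ((h c (Ne.symm hac) (Ne.symm hbc) (Ne.symm hwc)).mp hca)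
    · -- a and w agree off {a,b,w}
      have hwcadj : G.Adj w c := (h c (Ne.symm hac) (Ne.symm hbc) (Ne.symm hwc)).mp hca
      rcases hB a c w hac (Ne.symm hwa) (Ne.symm hwc) with h' | h' | h'
      · apply htac
        intro z hza hzc
        by_cases hzw : z = w
        · subst hzw
          exact ⟨fun _ => hwcadj.symm, fun _ => haw⟩
        · exact h' z hza hzc hzw
      · exact hab' ((h' b (Ne.symm hab) hbc (Ne.symm hwb')).mpr hwb)
      · exact hcb ((h' b (Ne.symm hab) hbc (Ne.symm hwb')).mpr hwb).symm
    · -- b and w agree off {a,b,w}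
      have hwcadj : ¬ G.Adj w c :=
        fun h' => hcb ((h c (Ne.symm hac) (Ne.symm hbc) (Ne.symm hwc)).mpr h')
      obtain ⟨v, hcv, hvb⟩ := common_neighbor hd (Ne.symm hbc) (fun h' => hcb h'.symm)
      have hva : v ≠ a := by rintro rfl; exact hab' hvb
      have hvw : v ≠ w := by rintro rfl; exact hwcadj hcv.symm
      have hvb' : v ≠ b := hvb.ne
      have hvc : v ≠ c := hcv.ne'
      have H : ∀ z, z ≠ b → z ≠ c → z ≠ w → (G.Adj c z ↔ G.Adj w z) := by
        rcases hB b c w hbc (Ne.symm hwb') (Ne.symm hwc) with h' | h' | h'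
        · exact absurd ((h' a hab hac (Ne.symm hwa)).mpr hca.symm)
            (fun hh => hab' hh.symm)
        · exact absurd ((h' a hab hac (Ne.symm hwa)).mpr haw.symm)
            (fun hh => hab' hh.symm)
        · exact h'
      have hvwadj : G.Adj w v := (H v hvb' hvc hvw).mp hcv
      rcases hB a c v hac (Ne.symm hva) (Ne.symm hvc) with h' | h' | h'
      · exact hwcadj ((h' w hwa hwc (Ne.symm hvw)).mp haw).symm
      · exact hab' ((h' b (Ne.symm hab) hbc (Ne.symm hvb')).mpr hvb)
      · exact hcb ((h' b (Ne.symm hab) hbc (Ne.symm hvb')).mpr hvb).symm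

end classify

section classify2
variable {V : Type*} {G : SimpleGraph V}

lemma uniform_clique {A : Set V} (hTw : ∀ x ∈ A, ∀ y ∈ A, Twin G x y)
    {x y : V} (hx : x ∈ A) (hy : y ∈ A) (hxy : x ≠ y) (hadj : G.Adj x y) :
    IsCliqueOn G A := by
  -- step: x is adjacent to every other element of A
  have step : ∀ x' ∈ A, ∀ y' ∈ A, x' ≠ y' → G.Adj x' y' → ∀ z ∈ A, z ≠ x' → G.Adj x' z := by
    intro x' hx' y' hy' hne hadj' z hz hzx
    by_cases hzy : z = y'
    · subst hzy; exact hadj'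
    · exact ((hTw y' hy' z hz x' hne (Ne.symm hzx)).mp hadj'.symm).symm
  intro x' hx' y' hy' hne
  by_cases hy'x : y' = x
  · rw [hy'x]
    exact (step x hx y hy hxy hadj x' hx' (fun h => hne (h.trans hy'x.symm))).symm
  · have h1 : G.Adj x y' := step x hx y hy hxy hadj y' hy' hy'x
    by_cases hx'x : x' = x
    · rw [hx'x]; exact h1
    · exact (step y' hy' x hx hy'x h1.symm x' hx' hne).symm

lemma classify (hG : G.Connected) (hd : Diam2 G) (hA : AdjA G) (hB : AdjB G) :
    P1 G ∨ P2 G ∨ P3 G := by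
  by_cases h3 : ∃ a b c : V, a ≠ b ∧ a ≠ c ∧ b ≠ c ∧
      ¬ Twin G a b ∧ ¬ Twin G a c ∧ ¬ Twin G b c
  · -- three pairwise non-twins: family 3
    obtain ⟨a, b, c, hab, hac, hbc, ht1, ht2, ht3⟩ := h3
    right; right
    rcases hB a b c hab hac hbc with hp | hp | hp
    · -- (a,b) pinned at c
      have hdist : ¬ (G.Adj a c ↔ G.Adj b c) := by
        intro hiff
        apply ht1
        intro z hza hzb
        by_cases hzc : z = c
        · subst hzc; exact hiff
        · exact hp z hza hzb hzc
      by_cases hca : G.Adj a c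
      · have hcb : ¬ G.Adj b c := fun h => hdist ⟨fun _ => h, fun _ => hca⟩
        exact key_lemma hG hd hB hab hac hbc ht2 hp hca hcb
      · have hcb : G.Adj b c := by
          by_contra h
          exact hdist ⟨fun h' => absurd h' hca, fun h' => absurd h' h⟩
        exact key_lemma hG hd hB (Ne.symm hab) hbc hac ht3
          (fun z hzb hza hzc => (hp z hza hzb hzc).symm) hcb hca
    · -- (a,c) pinned at b
      have hdist : ¬ (G.Adj a b ↔ G.Adj c b) := by
        intro hiff
        apply ht2
        intro z hza hzc
        by_cases hzb : z = b
        · subst hzb; exact hiff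
        · exact hp z hza hzb hzc
      by_cases hba : G.Adj a b
      · have hbc' : ¬ G.Adj c b := fun h => hdist ⟨fun _ => h, fun _ => hba⟩
        exact key_lemma hG hd hB hac hab (Ne.symm hbc) ht1
          (fun z hza hzc hzb => hp z hza hzb hzc) hba hbc'
      · have hbc' : G.Adj c b := by
          by_contra h
          exact hdist ⟨fun h' => absurd h' hba, fun h' => absurd h' h⟩
        exact key_lemma hG hd hB (Ne.symm hac) (Ne.symm hbc) hab
          (fun h => ht3 h.symm)
          (fun z hzc hza hzb => (hp z hza hzb hzc).symm) hbc' hba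
    · -- (b,c) pinned at a
      have hdist : ¬ (G.Adj b a ↔ G.Adj c a) := by
        intro hiff
        apply ht3
        intro z hzb hzc
        by_cases hza : z = a
        · subst hza; exact hiff
        · exact hp z hza hzb hzc
      by_cases hba : G.Adj b a
      · have hca' : ¬ G.Adj c a := fun h => hdist ⟨fun _ => h, fun _ => hba⟩
        exact key_lemma hG hd hB hbc (Ne.symm hab) (Ne.symm hac)
          (fun h => ht1 h.symm)
          (fun z hzb hzc hza => hp z hza hzb hzc) hba hca'
      · have hca' : G.Adj c a := by
          by_contra h
          exact hdist ⟨fun h' => absurd h' hba, fun h' => absurd h' h⟩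
        exact key_lemma hG hd hB (Ne.symm hbc) (Ne.symm hac) (Ne.symm hab)
          (fun h => ht2 h.symm)
          (fun z hzc hzb hza => (hp z hza hzb hzc).symm) hca' hba
  · -- at most two twin classes
    obtain ⟨a0, b0, z0, hab0, hz0a, hz0b, hA0⟩ := hA
    have hnt : ¬ Twin G a0 b0 := fun h => hA0 (h z0 hz0a hz0b)
    set A : Set V := {v | Twin G v a0} with hAdef
    have ha0A : a0 ∈ A := Twin.refl a0
    have hb0A : b0 ∉ A := fun h => hnt (Twin.symm h)
    have hsplit : ∀ v, v ∉ A → Twin G v b0 := by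
      intro v hv
      by_cases hvb : v = b0
      · subst hvb; exact Twin.refl _
      have hva : v ≠ a0 := fun h => hv (h ▸ ha0A)
      by_contra hvt
      exact h3 ⟨a0, b0, v, hab0, Ne.symm hva, Ne.symm hvb, hnt,
        fun h => hv (Twin.symm h), fun h => hvt (Twin.symm h)⟩
    have hTwA : ∀ x ∈ A, ∀ y ∈ A, Twin G x y := by
      intro x hx y hy
      exact Twin.trans hx (Twin.symm hy)
    have hTwB : ∀ x ∈ Aᶜ, ∀ y ∈ Aᶜ, Twin G x y := by
      intro x hx y hy
      exact Twin.trans (hsplit x hx) (Twin.symm (hsplit y hy))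
    -- cross adjacency is uniform
    have hcross_iff : ∀ x ∈ A, ∀ y ∈ Aᶜ, (G.Adj x y ↔ G.Adj a0 b0) := by
      intro x hx y hy
      have hxy : x ≠ y := fun h => hy (h ▸ hx)
      have hya0 : y ≠ a0 := fun h => hy (h ▸ ha0A)
      have hxTw : Twin G x a0 := hx
      have h1 : G.Adj x y ↔ G.Adj a0 y := by
        by_cases hxa0 : x = a0
        · rw [hxa0]
        · exact hxTw y (Ne.symm hxy) hya0
      have h2 : G.Adj a0 y ↔ G.Adj a0 b0 := by
        by_cases hyb0 : y = b0
        · subst hyb0; exact Iff.rfl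
        · have := hsplit y hy a0 (Ne.symm hya0) hab0
          constructor
          · intro h; exact (this.mp h.symm).symm
          · intro h; exact (this.mpr h.symm).symm
      exact h1.trans h2
    have hcross : G.Adj a0 b0 := by
      by_contra hna
      obtain ⟨x, hx, y, hy, hadj⟩ := exists_cross_edge hG ha0A hb0A
      exact hna ((hcross_iff x hx y hy).mp hadj)
    have hcrossAll : CrossAll G A := fun x hx y hy => (hcross_iff x hx y hy).mpr hcross
    by_cases eA : ∃ x ∈ A, ∃ y ∈ A, x ≠ y ∧ G.Adj x y
    · obtain ⟨x, hx, y, hy, hxy, hadj⟩ := eA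
      have hclA : IsCliqueOn G A := uniform_clique hTwA hx hy hxy hadj
      by_cases eB : ∃ x ∈ Aᶜ, ∃ y ∈ Aᶜ, x ≠ y ∧ G.Adj x y
      · -- both cliques : contradiction with ¬Twin a0 b0
        obtain ⟨x', hx', y', hy', hxy', hadj'⟩ := eB
        have hclB : IsCliqueOn G Aᶜ := uniform_clique hTwB hx' hy' hxy' hadj'
        exfalso
        apply hnt
        intro z hza hzb
        constructor
        · intro _
          by_cases hz : z ∈ A
          · exact (hcrossAll z hz b0 hb0A).symm
          · exact (hclB z hz b0 hb0A hzb).symm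
        · intro _
          by_cases hz : z ∈ A
          · exact (hclA z hz a0 ha0A hza).symm
          · exact hcrossAll a0 ha0A z hz
      · have hindB : IsIndepOn G Aᶜ := by
          intro x' hx' y' hy' hne hadj'
          exact eB ⟨x', hx', y', hy', hne, hadj'⟩
        by_cases e2B : ∃ y1 ∈ Aᶜ, ∃ y2 ∈ (Aᶜ : Set V), y1 ≠ y2
        · right; left
          exact ⟨A, ⟨a0, ha0A⟩, e2B, hclA, hindB, hcrossAll⟩
        · -- Aᶜ has a single element b0 : contradiction
          exfalso
          apply hnt
          intro z hza hzb
          have hzA : z ∈ A := by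
            by_contra hz
            exact e2B ⟨z, hz, b0, hb0A, hzb⟩
          constructor
          · intro _; exact (hcrossAll z hzA b0 hb0A).symm
          · intro _; exact (hclA z hzA a0 ha0A hza).symm
    · have hindA : IsIndepOn G A := by
        intro x' hx' y' hy' hne hadj'
        exact eA ⟨x', hx', y', hy', hne, hadj'⟩
      by_cases eB : ∃ x ∈ Aᶜ, ∃ y ∈ Aᶜ, x ≠ y ∧ G.Adj x y
      · obtain ⟨x', hx', y', hy', hxy', hadj'⟩ := eB
        have hclB : IsCliqueOn G Aᶜ := uniform_clique hTwB hx' hy' hxy' hadj'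
        by_cases e2A : ∃ y1 ∈ (Aᶜᶜ : Set V), ∃ y2 ∈ (Aᶜᶜ : Set V), y1 ≠ y2
        · right; left
          refine ⟨Aᶜ, ⟨b0, hb0A⟩, e2A, hclB, ?_, ?_⟩
          · rw [compl_compl]; exact hindA
          · intro x hx y hy
            rw [compl_compl] at hy
            exact (hcrossAll y hy x hx).symm
        · -- A has a single element a0 : contradiction
          exfalso
          apply hnt
          intro z hza hzb
          have hzB : z ∈ Aᶜ := by
            by_contra hz
            rw [Set.notMem_compl_iff] at hz
            exact e2A ⟨z, by rw [compl_compl]; exact hz, a0, by rw [compl_compl]; exact ha0A, hza⟩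
          constructor
          · intro _; exact (hclB z hzB b0 hb0A hzb).symm
          · intro _; exact (hcrossAll a0 ha0A z hzB)
      · have hindB : IsIndepOn G Aᶜ := by
          intro x' hx' y' hy' hne hadj'
          exact eB ⟨x', hx', y', hy', hne, hadj'⟩
        left
        exact ⟨A, ⟨a0, ha0A⟩, ⟨b0, hb0A⟩, hindA, hindB, hcrossAll⟩

end classify2

section conds
variable {V : Type*} {G : SimpleGraph V}

lemma edist_le_two_of_mid {x w y : V} (h1 : G.Adj x w) (h2 : G.Adj w y) :
    G.edist x y ≤ 2 := by
  refine le_trans (SimpleGraph.edist_triangle (v := w)) ?_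
  rw [SimpleGraph.edist_eq_one_iff_adj.mpr h1, SimpleGraph.edist_eq_one_iff_adj.mpr h2]
  decide

lemma edist_le_two_of_adj {x y : V} (h : G.Adj x y) : G.edist x y ≤ 2 := by
  rw [SimpleGraph.edist_eq_one_iff_adj.mpr h]; decide

lemma adjB_of_classes (R : V → V → Prop)
    (tw : ∀ x y, x ≠ y → R x y → ∀ z, z ≠ x → z ≠ y → (G.Adj x z ↔ G.Adj y z))
    (pig : ∀ a b c : V, a ≠ b → a ≠ c → b ≠ c → R a b ∨ R a c ∨ R b c) : AdjB G := by
  intro a b c hab hac hbc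
  rcases pig a b c hab hac hbc with h | h | h
  · exact Or.inl (fun z h1 h2 _ => tw a b hab h z h1 h2)
  · exact Or.inr (Or.inl (fun z h1 h2 h3 => tw a c hac h z h1 h3))
  · exact Or.inr (Or.inr (fun z h1 h2 h3 => tw b c hbc h z h2 h3))

lemma conds1 {A : Set V} (hA : A.Nonempty) (hA' : Aᶜ.Nonempty)
    (big : ∃ x y z : V, x ≠ y ∧ x ≠ z ∧ y ≠ z)
    (hi : IsIndepOn G A) (hi' : IsIndepOn G Aᶜ) (hc : CrossAll G A) :
    Diam2 G ∧ AdjA G ∧ AdjB G := by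
  obtain ⟨a0, ha0⟩ := hA
  obtain ⟨b0, hb0⟩ := hA'
  refine ⟨?_, ?_, ?_⟩
  · intro x y hxy
    by_cases hx : x ∈ A <;> by_cases hy : y ∈ A
    · exact edist_le_two_of_mid (hc x hx b0 hb0) (hc y hy b0 hb0).symm
    · exact edist_le_two_of_adj (hc x hx y hy)
    · exact edist_le_two_of_adj (hc y hy x hx).symm
    · exact edist_le_two_of_mid (hc a0 ha0 x hx).symm (hc a0 ha0 y hy)
  · -- AdjA : need two vertices on a same side
    obtain ⟨x, y, z, hxy, hxz, hyz⟩ := big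
    have pig : ∃ u v : V, u ≠ v ∧ ((u ∈ A ∧ v ∈ A) ∨ (u ∉ A ∧ v ∉ A)) := by
      by_cases hx : x ∈ A <;> by_cases hy : y ∈ A <;> by_cases hz : z ∈ A
      · exact ⟨x, y, hxy, Or.inl ⟨hx, hy⟩⟩
      · exact ⟨x, y, hxy, Or.inl ⟨hx, hy⟩⟩
      · exact ⟨x, z, hxz, Or.inl ⟨hx, hz⟩⟩
      · exact ⟨y, z, hyz, Or.inr ⟨hy, hz⟩⟩
      · exact ⟨y, z, hyz, Or.inl ⟨hy, hz⟩⟩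
      · exact ⟨x, z, hxz, Or.inr ⟨hx, hz⟩⟩
      · exact ⟨x, y, hxy, Or.inr ⟨hx, hy⟩⟩
      · exact ⟨x, y, hxy, Or.inr ⟨hx, hy⟩⟩
    obtain ⟨u, v, huv, h⟩ := pig
    rcases h with ⟨hu, hv⟩ | ⟨hu, hv⟩
    · refine ⟨u, b0, v, fun h => hb0 (h ▸ hu), Ne.symm huv, fun h => hb0 (h ▸ hv), ?_⟩
      intro hiff
      exact hi u hu v hv huv (hiff.mpr (hc v hv b0 hb0).symm)
    · refine ⟨u, a0, v, fun h => hu (h ▸ ha0), Ne.symm huv, fun h => hv (h ▸ ha0), ?_⟩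
      intro hiff
      exact hi' u (by simpa using hu) v (by simpa using hv) huv
        (hiff.mpr (hc a0 ha0 v (by simpa using hv)))
  · refine adjB_of_classes (fun x y => (x ∈ A ↔ y ∈ A)) ?_ (fun a b c _ _ _ => by tauto)
    intro x y hxy hR z hzx hzy
    by_cases hx : x ∈ A
    · have hy : y ∈ A := hR.mp hx
      by_cases hz : z ∈ A
      · constructor
        · intro h; exact absurd h (hi x hx z hz (Ne.symm hzx))
        · intro h; exact absurd h (hi y hy z hz (Ne.symm hzy))
      · exact ⟨fun _ => hc y hy z hz, fun _ => hc x hx z hz⟩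
    · have hy : y ∉ A := fun h => hx (hR.mpr h)
      by_cases hz : z ∈ A
      · exact ⟨fun _ => (hc z hz y hy).symm, fun _ => (hc z hz x hx).symm⟩
      · constructor
        · intro h; exact absurd h (hi' x hx z hz (Ne.symm hzx))
        · intro h; exact absurd h (hi' y hy z hz (Ne.symm hzy))

lemma conds2 {A : Set V} (hA : A.Nonempty)
    (h2 : ∃ y1 ∈ Aᶜ, ∃ y2 ∈ Aᶜ, y1 ≠ y2)
    (hcl : IsCliqueOn G A) (hi : IsIndepOn G Aᶜ) (hc : CrossAll G A) :
    Diam2 G ∧ AdjA G ∧ AdjB G := by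
  obtain ⟨a0, ha0⟩ := hA
  obtain ⟨y1, hy1, y2, hy2, hy12⟩ := h2
  have hadjA : ∀ x ∈ A, ∀ y, y ≠ x → G.Adj x y := by
    intro x hx y hyx
    by_cases hy : y ∈ A
    · exact hcl x hx y hy (Ne.symm hyx)
    · exact hc x hx y hy
  refine ⟨?_, ?_, ?_⟩
  · intro x y hxy
    by_cases hx : x ∈ A
    · exact edist_le_two_of_adj (hadjA x hx y (Ne.symm hxy))
    by_cases hy : y ∈ A
    · exact edist_le_two_of_adj (hadjA y hy x hxy).symm
    · exact edist_le_two_of_mid (hc a0 ha0 x hx).symm (hc a0 ha0 y hy)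
  · refine ⟨a0, y1, y2, fun h => hy1 (h ▸ ha0), ?_, hy12.symm, ?_⟩
    · intro h; rw [h] at hy2; exact hy2 ha0
    · intro hiff
      exact hi y1 hy1 y2 hy2 hy12 (hiff.mp (hc a0 ha0 y2 hy2))
  · refine adjB_of_classes (fun x y => (x ∈ A ↔ y ∈ A)) ?_ (fun a b c _ _ _ => by tauto)
    intro x y hxy hR z hzx hzy
    by_cases hx : x ∈ A
    · have hy : y ∈ A := hR.mp hx
      exact ⟨fun _ => hadjA y hy z hzy, fun _ => hadjA x hx z hzx⟩
    · have hy : y ∉ A := fun h => hx (hR.mpr h)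
      by_cases hz : z ∈ A
      · exact ⟨fun _ => (hadjA z hz y (Ne.symm hzy)).symm,
          fun _ => (hadjA z hz x (Ne.symm hzx)).symm⟩
      · constructor
        · intro h; exact absurd h (hi x hx z hz (Ne.symm hzx))
        · intro h; exact absurd h (hi y hy z hz (Ne.symm hzy))

lemma conds3 {A : Set V} {u : V} (hu : u ∉ A) (hA : A.Nonempty)
    (hC : ((insert u A)ᶜ).Nonempty)
    (dom : ∀ x ∈ A, ∀ y, y ≠ x → G.Adj x y)
    (hcl : IsCliqueOn G ((insert u A)ᶜ))
    (hnadj : ∀ y ∈ (insert u A)ᶜ, ¬ G.Adj u y) :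
    Diam2 G ∧ AdjA G ∧ AdjB G := by
  set C : Set V := (insert u A)ᶜ with hCdef
  obtain ⟨a0, ha0⟩ := hA
  obtain ⟨c0, hc0⟩ := hC
  have htri : ∀ v : V, v ∈ A ∨ v = u ∨ v ∈ C := by
    intro v
    by_cases hv : v ∈ A
    · exact Or.inl hv
    by_cases hvu : v = u
    · exact Or.inr (Or.inl hvu)
    · refine Or.inr (Or.inr ?_)
      intro hmem
      rcases Set.mem_insert_iff.mp hmem with h | h
      · exact hvu h
      · exact hv h
  have huC : u ∉ C := fun h => h (Set.mem_insert _ _)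
  have hAC : ∀ x ∈ A, x ∉ C := fun x hx h => h (Set.mem_insert_of_mem _ hx)
  have hAu : ∀ x ∈ A, x ≠ u := fun x hx h => hu (h ▸ hx)
  have hCu : ∀ x ∈ C, x ≠ u := fun x hx h => huC (h ▸ hx)
  have hCA : ∀ x ∈ C, x ∉ A := fun x hx h => hAC x h hx
  refine ⟨?_, ?_, ?_⟩
  · -- Diam2
    intro x y hxy
    rcases htri x with hx | hx | hx
    · exact edist_le_two_of_adj (dom x hx y (Ne.symm hxy))
    · rcases htri y with hy | hy | hy
      · exact edist_le_two_of_adj (dom y hy x hxy).symm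
      · exact absurd (hx.trans hy.symm) hxy
      · exact edist_le_two_of_mid
          (dom a0 ha0 x (fun h => hAu a0 ha0 (h.symm.trans hx))).symm
          (dom a0 ha0 y (fun h => hCA y hy (h ▸ ha0)))
    · rcases htri y with hy | hy | hy
      · exact edist_le_two_of_adj (dom y hy x hxy).symm
      · exact edist_le_two_of_mid (dom a0 ha0 x (fun h => (hCA x hx) (h ▸ ha0))).symm
          (dom a0 ha0 y (fun h => hAu a0 ha0 (h.symm.trans hy)))
      · exact edist_le_two_of_adj (hcl x hx y hy hxy)
  · -- AdjA
    refine ⟨a0, c0, u, fun h => hAC a0 ha0 (h ▸ hc0), Ne.symm (hAu a0 ha0),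
      Ne.symm (hCu c0 hc0), ?_⟩
    intro hiff
    exact hnadj c0 hc0 ((hiff.mp (dom a0 ha0 u (Ne.symm (hAu a0 ha0)))).symm)
  · -- AdjB
    have twin2 : ∀ x y, x ≠ y → ((x ∈ A ∧ y ∈ A) ∨ (x ∈ C ∧ y ∈ C)) →
        ∀ z, z ≠ x → z ≠ y → (G.Adj x z ↔ G.Adj y z) := by
      rintro x y hxy (⟨hx, hy⟩ | ⟨hx, hy⟩) z hzx hzy
      · exact ⟨fun _ => dom y hy z hzy, fun _ => dom x hx z hzx⟩
      · rcases htri z with hz | hz | hz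
        · exact ⟨fun _ => (dom z hz y (Ne.symm hzy)).symm, fun _ => (dom z hz x (Ne.symm hzx)).symm⟩
        · subst hz
          constructor
          · intro h; exact absurd h.symm (hnadj x hx)
          · intro h; exact absurd h.symm (hnadj y hy)
        · exact ⟨fun _ => hcl y hy z hz (Ne.symm hzy), fun _ => hcl x hx z hz (Ne.symm hzx)⟩
    have twinAC : ∀ x ∈ A, ∀ y ∈ C, ∀ z, z ≠ x → z ≠ y → z ≠ u →
        (G.Adj x z ↔ G.Adj y z) := by
      intro x hx y hy z hzx hzy hzu
      rcases htri z with hz | hz | hz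
      · exact ⟨fun _ => (dom z hz y (Ne.symm hzy)).symm, fun _ => dom x hx z hzx⟩
      · exact absurd hz hzu
      · exact ⟨fun _ => hcl y hy z hz (Ne.symm hzy), fun _ => dom x hx z hzx⟩
    intro a b c hab hac hbc
    rcases htri a with ha | ha | ha <;> rcases htri b with hb | hb | hb <;>
      rcases htri c with hc | hc | hc
    · exact Or.inl (fun z h1 h2 _ => twin2 a b hab (Or.inl ⟨ha, hb⟩) z h1 h2)
    · exact Or.inl (fun z h1 h2 _ => twin2 a b hab (Or.inl ⟨ha, hb⟩) z h1 h2)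
    · exact Or.inl (fun z h1 h2 _ => twin2 a b hab (Or.inl ⟨ha, hb⟩) z h1 h2)
    · exact Or.inr (Or.inl (fun z h1 h2 h3 => twin2 a c hac (Or.inl ⟨ha, hc⟩) z h1 h3))
    · exact absurd (hb.trans hc.symm) hbc
    · exact Or.inr (Or.inl (fun z h1 h2 h3 =>
        twinAC a ha c hc z h1 h3 (fun h => h2 (h.trans hb.symm))))
    · exact Or.inr (Or.inl (fun z h1 h2 h3 => twin2 a c hac (Or.inl ⟨ha, hc⟩) z h1 h3))
    · exact Or.inl (fun z h1 h2 h3 =>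
        twinAC a ha b hb z h1 h2 (fun h => h3 (h.trans hc.symm)))
    · exact Or.inr (Or.inr (fun z h1 h2 h3 => twin2 b c hbc (Or.inr ⟨hb, hc⟩) z h2 h3))
    · exact Or.inr (Or.inr (fun z h1 h2 h3 => twin2 b c hbc (Or.inl ⟨hb, hc⟩) z h2 h3))
    · exact absurd (ha.trans hc.symm) hac
    · exact Or.inr (Or.inr (fun z h1 h2 h3 =>
        twinAC b hb c hc z h2 h3 (fun h => h1 (h.trans ha.symm))))
    · exact absurd (ha.trans hb.symm) hab
    · exact absurd (ha.trans hb.symm) hab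
    · exact absurd (ha.trans hb.symm) hab
    · exact Or.inr (Or.inr (fun z h1 h2 h3 =>
        (twinAC c hc b hb z h3 h2 (fun h => h1 (h.trans ha.symm))).symm))
    · exact absurd (ha.trans hc.symm) hac
    · exact Or.inr (Or.inr (fun z h1 h2 h3 => twin2 b c hbc (Or.inr ⟨hb, hc⟩) z h2 h3))
    · exact Or.inr (Or.inr (fun z h1 h2 h3 => twin2 b c hbc (Or.inl ⟨hb, hc⟩) z h2 h3))
    · exact Or.inl (fun z h1 h2 h3 =>
        (twinAC b hb a ha z h2 h1 (fun h => h3 (h.trans hc.symm))).symm)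
    · exact Or.inr (Or.inl (fun z h1 h2 h3 => twin2 a c hac (Or.inr ⟨ha, hc⟩) z h1 h3))
    · exact Or.inr (Or.inl (fun z h1 h2 h3 =>
        (twinAC c hc a ha z h3 h1 (fun h => h2 (h.trans hb.symm))).symm))
    · exact absurd (hb.trans hc.symm) hbc
    · exact Or.inr (Or.inl (fun z h1 h2 h3 => twin2 a c hac (Or.inr ⟨ha, hc⟩) z h1 h3))
    · exact Or.inl (fun z h1 h2 _ => twin2 a b hab (Or.inr ⟨ha, hb⟩) z h1 h2)
    · exact Or.inl (fun z h1 h2 _ => twin2 a b hab (Or.inr ⟨ha, hb⟩) z h1 h2)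
    · exact Or.inl (fun z h1 h2 _ => twin2 a b hab (Or.inr ⟨ha, hb⟩) z h1 h2)

end conds

section iso
variable {V : Type*} {G : SimpleGraph V}

lemma graphJoin_adj_ll {α β : Type*} (G' : SimpleGraph α) (H : SimpleGraph β) (a b : α) :
    (graphJoin G' H).Adj (Sum.inl a) (Sum.inl b) ↔ G'.Adj a b := Iff.rfl
lemma graphJoin_adj_rr {α β : Type*} (G' : SimpleGraph α) (H : SimpleGraph β) (a b : β) :
    (graphJoin G' H).Adj (Sum.inr a) (Sum.inr b) ↔ H.Adj a b := Iff.rfl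
lemma graphJoin_adj_lr {α β : Type*} (G' : SimpleGraph α) (H : SimpleGraph β) (a : α) (b : β) :
    (graphJoin G' H).Adj (Sum.inl a) (Sum.inr b) ↔ True := Iff.rfl
lemma graphJoin_adj_rl {α β : Type*} (G' : SimpleGraph α) (H : SimpleGraph β) (a : β) (b : α) :
    (graphJoin G' H).Adj (Sum.inr a) (Sum.inl b) ↔ True := Iff.rfl

lemma iso1_of_P1 [Fintype V] (h : P1 G) :
    ∃ s t : ℕ, 1 ≤ s ∧ 1 ≤ t ∧ Nonempty (G ≃g completeBipartiteGraph (Fin s) (Fin t)) := by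
  classical
  obtain ⟨A, hA, hA', hi, hi', hc⟩ := h
  haveI : Nonempty ↥A := hA.to_subtype
  haveI : Nonempty ↥(Aᶜ : Set V) := hA'.to_subtype
  set eA := Fintype.equivFin ↥A
  set eB := Fintype.equivFin ↥(Aᶜ : Set V)
  set f : V ≃ (Fin (Fintype.card ↥A) ⊕ Fin (Fintype.card ↥(Aᶜ : Set V))) :=
    (Equiv.Set.sumCompl A).symm.trans (Equiv.sumCongr eA eB) with hf
  have hfA : ∀ x (hx : x ∈ A), f x = Sum.inl (eA ⟨x, hx⟩) := by
    intro x hx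
    simp [hf, Equiv.Set.sumCompl_symm_apply_of_mem hx]
  have hfB : ∀ x (hx : x ∉ A), f x = Sum.inr (eB ⟨x, hx⟩) := by
    intro x hx
    simp [hf, Equiv.Set.sumCompl_symm_apply_of_notMem hx]
  refine ⟨_, _, Fintype.card_pos, Fintype.card_pos, ⟨⟨f, ?_⟩⟩⟩
  intro x y
  by_cases hx : x ∈ A <;> by_cases hy : y ∈ A
  · rw [hfA x hx, hfA y hy]
    simp only [completeBipartiteGraph_adj]
    constructor
    · intro hcon; simp at hcon
    · intro hadj; exact absurd hadj (hi x hx y hy hadj.ne)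
  · rw [hfA x hx, hfB y hy]
    simp only [completeBipartiteGraph_adj]
    constructor
    · intro _; exact hc x hx y hy
    · intro _; simp
  · rw [hfB x hx, hfA y hy]
    simp only [completeBipartiteGraph_adj]
    constructor
    · intro _; exact (hc y hy x hx).symm
    · intro _; simp
  · rw [hfB x hx, hfB y hy]
    simp only [completeBipartiteGraph_adj]
    constructor
    · intro hcon; simp at hcon
    · intro hadj; exact absurd hadj (hi' x hx y hy hadj.ne)

lemma iso2_of_P2 [Fintype V] (h : P2 G) :
    ∃ s t : ℕ, 1 ≤ s ∧ 2 ≤ t ∧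
      Nonempty (G ≃g graphJoin (⊤ : SimpleGraph (Fin s)) (⊥ : SimpleGraph (Fin t))) := by
  classical
  obtain ⟨A, hA, h2, hcl, hi, hc⟩ := h
  obtain ⟨y1, hy1, y2, hy2, hy12⟩ := h2
  haveI : Nonempty ↥A := hA.to_subtype
  set eA := Fintype.equivFin ↥A
  set eB := Fintype.equivFin ↥(Aᶜ : Set V)
  set f : V ≃ (Fin (Fintype.card ↥A) ⊕ Fin (Fintype.card ↥(Aᶜ : Set V))) :=
    (Equiv.Set.sumCompl A).symm.trans (Equiv.sumCongr eA eB) with hf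
  have hfA : ∀ x (hx : x ∈ A), f x = Sum.inl (eA ⟨x, hx⟩) := by
    intro x hx
    simp [hf, Equiv.Set.sumCompl_symm_apply_of_mem hx]
  have hfB : ∀ x (hx : x ∉ A), f x = Sum.inr (eB ⟨x, hx⟩) := by
    intro x hx
    simp [hf, Equiv.Set.sumCompl_symm_apply_of_notMem hx]
  have hcard2 : 2 ≤ Fintype.card ↥(Aᶜ : Set V) := by
    rw [Nat.succ_le_iff]
    exact Fintype.one_lt_card_iff.mpr ⟨⟨y1, hy1⟩, ⟨y2, hy2⟩, by simp [hy12]⟩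
  refine ⟨_, _, Fintype.card_pos, hcard2, ⟨⟨f, ?_⟩⟩⟩
  intro x y
  by_cases hx : x ∈ A <;> by_cases hy : y ∈ A
  · rw [hfA x hx, hfA y hy, graphJoin_adj_ll, top_adj]
    constructor
    · intro hne
      have hxy : x ≠ y := by
        intro h; apply hne; subst h; rfl
      exact hcl x hx y hy hxy
    · intro hadj h
      have : (⟨x, hx⟩ : ↥A) = ⟨y, hy⟩ := eA.injective h
      exact hadj.ne (by simpa using this)
  · rw [hfA x hx, hfB y hy, graphJoin_adj_lr]
    exact ⟨fun _ => hc x hx y hy, fun _ => trivial⟩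
  · rw [hfB x hx, hfA y hy, graphJoin_adj_rl]
    exact ⟨fun _ => (hc y hy x hx).symm, fun _ => trivial⟩
  · rw [hfB x hx, hfB y hy, graphJoin_adj_rr, bot_adj]
    exact ⟨fun hcon => hcon.elim, fun hadj => absurd hadj (hi x hx y hy hadj.ne)⟩

lemma iso3_of_P3 [Fintype V] (h : P3 G) :
    ∃ s t : ℕ, 1 ≤ s ∧ 1 ≤ t ∧
      Nonempty (G ≃g graphJoin (⊤ : SimpleGraph (Fin s))
        ((⊤ : SimpleGraph (Fin 1)) ⊕g (⊤ : SimpleGraph (Fin t)))) := by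
  classical
  obtain ⟨u, A, hu, hA, hC, dom, hcl, hnadj⟩ := h
  haveI : Nonempty ↥A := hA.to_subtype
  have huc : u ∈ (Aᶜ : Set V) := hu
  set U : Set ↥(Aᶜ : Set V) := {w | (w : V) = u} with hU
  haveI : Unique ↥U := {
    default := ⟨⟨u, huc⟩, rfl⟩
    uniq := fun w => Subtype.ext (Subtype.ext w.2) }
  set eU : ↥U ≃ Fin 1 := Equiv.ofUnique ↥U (Fin 1)
  have hCne : ∃ w : ↥(Aᶜ : Set V), w ∉ U := by
    obtain ⟨c0, hc0⟩ := hC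
    have hc0A : c0 ∉ A := fun h => hc0 (Set.mem_insert_of_mem _ h)
    have hc0u : c0 ≠ u := fun h => hc0 (h ▸ Set.mem_insert _ _)
    exact ⟨⟨c0, hc0A⟩, hc0u⟩
  haveI : Nonempty ↥(Uᶜ : Set ↥(Aᶜ : Set V)) := by
    obtain ⟨w, hw⟩ := hCne
    exact ⟨⟨w, hw⟩⟩
  set eC := Fintype.equivFin ↥(Uᶜ : Set ↥(Aᶜ : Set V))
  set eA := Fintype.equivFin ↥A
  set g : ↥(Aᶜ : Set V) ≃ (Fin 1 ⊕ Fin (Fintype.card ↥(Uᶜ : Set ↥(Aᶜ : Set V)))) :=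
    (Equiv.Set.sumCompl U).symm.trans (Equiv.sumCongr eU eC) with hg
  set f : V ≃ (Fin (Fintype.card ↥A) ⊕ (Fin 1 ⊕ Fin (Fintype.card ↥(Uᶜ : Set ↥(Aᶜ : Set V))))) :=
    (Equiv.Set.sumCompl A).symm.trans (Equiv.sumCongr eA g) with hf
  have hfA : ∀ x (hx : x ∈ A), f x = Sum.inl (eA ⟨x, hx⟩) := by
    intro x hx
    simp [hf, Equiv.Set.sumCompl_symm_apply_of_mem hx]
  have hfu : ∀ x (hx : x ∉ A) (hxu : x = u), ∃ i, f x = Sum.inr (Sum.inl i) := by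
    intro x hx hxu
    have hmem : (⟨x, hx⟩ : ↥(Aᶜ : Set V)) ∈ U := hxu
    refine ⟨eU ⟨⟨x, hx⟩, hmem⟩, ?_⟩
    simp [hf, hg, Equiv.Set.sumCompl_symm_apply_of_notMem hx,
      Equiv.Set.sumCompl_symm_apply_of_mem hmem]
  have hfC : ∀ x (hx : x ∉ A) (hxu : x ≠ u),
      ∃ j, f x = Sum.inr (Sum.inr j) := by
    intro x hx hxu
    have hmem : (⟨x, hx⟩ : ↥(Aᶜ : Set V)) ∉ U := hxu
    refine ⟨eC ⟨⟨x, hx⟩, hmem⟩, ?_⟩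
    simp [hf, hg, Equiv.Set.sumCompl_symm_apply_of_notMem hx,
      Equiv.Set.sumCompl_symm_apply_of_notMem hmem]
  have hCmem : ∀ x, x ∉ A → x ≠ u → x ∈ (insert u A)ᶜ := by
    intro x hx hxu hmem
    rcases Set.mem_insert_iff.mp hmem with h | h
    · exact hxu h
    · exact hx h
  have hs : 1 ≤ Fintype.card ↥A := Fintype.card_pos
  have ht : 1 ≤ Fintype.card ↥(Uᶜ : Set ↥(Aᶜ : Set V)) := Fintype.card_pos
  refine ⟨_, _, hs, ht, ⟨⟨f, ?_⟩⟩⟩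
  have hinj : ∀ {x y : V}, f x = f y → x = y := fun h => f.injective h
  intro x y
  by_cases hx : x ∈ A
  · rw [hfA x hx]
    by_cases hy : y ∈ A
    · rw [hfA y hy, graphJoin_adj_ll, top_adj]
      constructor
      · intro hne
        refine dom x hx y ?_
        intro h; apply hne; subst h; rfl
      · intro hadj h
        exact hadj.ne (by simpa using eA.injective h)
    · by_cases hyu : y = u
      · obtain ⟨i, hi⟩ := hfu y hy hyu
        rw [hi, graphJoin_adj_lr]
        exact ⟨fun _ => dom x hx y (fun h => hy (h ▸ hx)), fun _ => trivial⟩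
      · obtain ⟨j, hj⟩ := hfC y hy hyu
        rw [hj, graphJoin_adj_lr]
        exact ⟨fun _ => dom x hx y (fun h => hy (h ▸ hx)), fun _ => trivial⟩
  · by_cases hxu : x = u
    · obtain ⟨i, hi⟩ := hfu x hx hxu
      rw [hi]
      by_cases hy : y ∈ A
      · rw [hfA y hy, graphJoin_adj_rl]
        exact ⟨fun _ => (dom y hy x (fun h => hx (h ▸ hy))).symm, fun _ => trivial⟩
      · by_cases hyu : y = u
        · obtain ⟨i', hi'⟩ := hfu y hy hyu
          rw [hi', graphJoin_adj_rr]
          have hxy : x = y := hxu.trans hyu.symm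
          constructor
          · intro hcon
            have : i ≠ i' := by simpa using hcon
            exact absurd (Subsingleton.elim i i') this
          · intro hadj
            exact absurd hxy hadj.ne
        · obtain ⟨j, hj⟩ := hfC y hy hyu
          rw [hj, graphJoin_adj_rr]
          constructor
          · intro hcon; simp at hcon
          · intro hadj
            exact absurd (show G.Adj u y from hxu ▸ hadj)
              (fun hh => hnadj y (hCmem y hy hyu) hh)
    · obtain ⟨j, hj⟩ := hfC x hx hxu
      rw [hj]
      by_cases hy : y ∈ A
      · rw [hfA y hy, graphJoin_adj_rl]
        exact ⟨fun _ => (dom y hy x (fun h => hx (h ▸ hy))).symm, fun _ => trivial⟩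
      · by_cases hyu : y = u
        · obtain ⟨i, hi⟩ := hfu y hy hyu
          rw [hi, graphJoin_adj_rr]
          constructor
          · intro hcon; simp at hcon
          · intro hadj
            exact absurd (show G.Adj x u from hyu ▸ hadj)
              (fun hh => hnadj x (hCmem x hx hxu) hh.symm)
        · obtain ⟨j', hj'⟩ := hfC y hy hyu
          rw [hj', graphJoin_adj_rr]
          have hsum : ((⊤ : SimpleGraph (Fin 1)) ⊕g (⊤ : SimpleGraph _)).Adj
              (Sum.inr j) (Sum.inr j') ↔ j ≠ j' := by simp
          rw [hsum]
          constructor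
          · intro hne
            refine hcl x (hCmem x hx hxu) y (hCmem y hy hyu) ?_
            intro h
            apply hne
            have : f x = f y := by rw [h]
            rw [hj, hj'] at this
            simpa using this
          · intro hadj h
            have : f x = f y := by rw [hj, hj', h]
            exact hadj.ne (hinj this)
end iso

section extract
variable {V : Type*} {G : SimpleGraph V}

lemma exists_three [Fintype V] (h : 3 ≤ Fintype.card V) :
    ∃ x y z : V, x ≠ y ∧ x ≠ z ∧ y ≠ z := by
  classical
  obtain ⟨x, y, hxy⟩ := Fintype.exists_pair_of_one_lt_card (α := V) (by omega)
  have : ∃ z : V, z ≠ x ∧ z ≠ y := by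
    by_contra hc
    push_neg at hc
    have hsub : (Finset.univ : Finset V) ⊆ {x, y} := by
      intro z _
      by_cases hz : z = x
      · exact Finset.mem_insert.mpr (Or.inl hz)
      · exact Finset.mem_insert.mpr (Or.inr (Finset.mem_singleton.mpr (hc z hz)))
    have := Finset.card_le_card hsub
    rw [Finset.card_univ] at this
    have h2 : ({x, y} : Finset V).card ≤ 2 := (Finset.card_insert_le _ _).trans (by norm_num)
    omega
  obtain ⟨z, hzx, hzy⟩ := this
  exact ⟨x, y, z, hxy, Ne.symm hzx, Ne.symm hzy⟩

lemma descr1 {s t : ℕ} (hs : 1 ≤ s) (ht : 1 ≤ t)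
    (e : G ≃g completeBipartiteGraph (Fin s) (Fin t))
    (big : ∃ x y z : V, x ≠ y ∧ x ≠ z ∧ y ≠ z) :
    Diam2 G ∧ AdjA G ∧ AdjB G := by
  set A : Set V := {v | (e v).isLeft = true} with hA
  have hmA : ∀ v, v ∈ A → ∃ i, e v = Sum.inl i := by
    intro v hv
    exact Sum.isLeft_iff.mp hv
  have hmB : ∀ v, v ∉ A → ∃ j, e v = Sum.inr j := by
    intro v hv
    rcases h : e v with i | j
    · exact absurd (by rw [hA]; simp [h]) hv
    · exact ⟨j, rfl⟩
  have hAne : A.Nonempty := by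
    refine ⟨e.symm (Sum.inl ⟨0, hs⟩), ?_⟩
    show (e (e.symm _)).isLeft = true
    rw [RelIso.apply_symm_apply]
    rfl
  have hBne : Aᶜ.Nonempty := by
    refine ⟨e.symm (Sum.inr ⟨0, ht⟩), ?_⟩
    show ¬ (e (e.symm _)).isLeft = true
    rw [RelIso.apply_symm_apply]
    simp
  refine conds1 hAne hBne big ?_ ?_ ?_
  · intro x hx y hy hxy hadj
    obtain ⟨i, hi⟩ := hmA x hx
    obtain ⟨j, hj⟩ := hmA y hy
    have := e.map_rel_iff.mpr hadj
    rw [hi, hj] at this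
    simp at this
  · intro x hx y hy hxy hadj
    obtain ⟨i, hi⟩ := hmB x hx
    obtain ⟨j, hj⟩ := hmB y hy
    have := e.map_rel_iff.mpr hadj
    rw [hi, hj] at this
    simp at this
  · intro x hx y hy
    obtain ⟨i, hi⟩ := hmA x hx
    obtain ⟨j, hj⟩ := hmB y hy
    refine e.map_rel_iff.mp ?_
    rw [hi, hj]
    simp

lemma descr2 {s t : ℕ} (hs : 1 ≤ s) (ht : 2 ≤ t)
    (e : G ≃g graphJoin (⊤ : SimpleGraph (Fin s)) (⊥ : SimpleGraph (Fin t))) :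
    Diam2 G ∧ AdjA G ∧ AdjB G := by
  set A : Set V := {v | (e v).isLeft = true} with hA
  have hmA : ∀ v, v ∈ A → ∃ i, e v = Sum.inl i := fun v hv => Sum.isLeft_iff.mp hv
  have hmB : ∀ v, v ∉ A → ∃ j, e v = Sum.inr j := by
    intro v hv
    rcases h : e v with i | j
    · exact absurd (by rw [hA]; simp [h]) hv
    · exact ⟨j, rfl⟩
  have hAne : A.Nonempty := by
    refine ⟨e.symm (Sum.inl ⟨0, hs⟩), ?_⟩
    show (e (e.symm _)).isLeft = true
    rw [RelIso.apply_symm_apply]; rfl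
  have h2 : ∃ y1 ∈ Aᶜ, ∃ y2 ∈ Aᶜ, y1 ≠ y2 := by
    refine ⟨e.symm (Sum.inr ⟨0, by omega⟩), ?_, e.symm (Sum.inr ⟨1, by omega⟩), ?_, ?_⟩
    · show ¬ (e (e.symm _)).isLeft = true
      rw [RelIso.apply_symm_apply]; simp
    · show ¬ (e (e.symm _)).isLeft = true
      rw [RelIso.apply_symm_apply]; simp
    · intro h
      have := e.symm.injective h
      simp [Fin.ext_iff] at this
  refine conds2 hAne h2 ?_ ?_ ?_
  · intro x hx y hy hxy
    obtain ⟨i, hi⟩ := hmA x hx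
    obtain ⟨j, hj⟩ := hmA y hy
    refine e.map_rel_iff.mp ?_
    rw [hi, hj, graphJoin_adj_ll, top_adj]
    intro h
    apply hxy
    apply e.injective
    rw [hi, hj, h]
  · intro x hx y hy hxy hadj
    obtain ⟨i, hi⟩ := hmB x hx
    obtain ⟨j, hj⟩ := hmB y hy
    have := e.map_rel_iff.mpr hadj
    rw [hi, hj, graphJoin_adj_rr, bot_adj] at this
    exact this
  · intro x hx y hy
    obtain ⟨i, hi⟩ := hmA x hx
    obtain ⟨j, hj⟩ := hmB y hy
    refine e.map_rel_iff.mp ?_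
    rw [hi, hj, graphJoin_adj_lr]
    trivial

lemma descr3 {s t : ℕ} (hs : 1 ≤ s) (ht : 1 ≤ t)
    (e : G ≃g graphJoin (⊤ : SimpleGraph (Fin s))
      ((⊤ : SimpleGraph (Fin 1)) ⊕g (⊤ : SimpleGraph (Fin t)))) :
    Diam2 G ∧ AdjA G ∧ AdjB G := by
  set A : Set V := {v | (e v).isLeft = true} with hA
  set u : V := e.symm (Sum.inr (Sum.inl 0)) with hudef
  have heu : e u = Sum.inr (Sum.inl 0) := by rw [hudef, RelIso.apply_symm_apply]
  have hmA : ∀ v, v ∈ A → ∃ i, e v = Sum.inl i := fun v hv => Sum.isLeft_iff.mp hv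
  have hmAof : ∀ v i, e v = Sum.inl i → v ∈ A := by
    intro v i h
    show (e v).isLeft = true
    rw [h]; rfl
  have hmC : ∀ v, v ∉ A → v ≠ u → ∃ j, e v = Sum.inr (Sum.inr j) := by
    intro v hv hvu
    rcases h : e v with i | w
    · exact absurd (hmAof v i h) hv
    · rcases w with i | j
      · exfalso
        apply hvu
        apply e.injective
        rw [h, heu, Subsingleton.elim i (0 : Fin 1)]
      · exact ⟨j, rfl⟩
  have huA : u ∉ A := by
    intro h
    obtain ⟨i, hi⟩ := hmA u h
    rw [heu] at hi
    simp at hi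
  have hAne : A.Nonempty := by
    refine ⟨e.symm (Sum.inl ⟨0, hs⟩), ?_⟩
    show (e (e.symm _)).isLeft = true
    rw [RelIso.apply_symm_apply]; rfl
  have hCmem : ∀ v, v ∉ A → v ≠ u → v ∈ (insert u A)ᶜ := by
    intro v hv hvu hmem
    rcases Set.mem_insert_iff.mp hmem with h | h
    · exact hvu h
    · exact hv h
  have hCmem' : ∀ v ∈ (insert u A)ᶜ, v ∉ A ∧ v ≠ u := by
    intro v hv
    exact ⟨fun h => hv (Set.mem_insert_of_mem _ h), fun h => hv (h ▸ Set.mem_insert _ _)⟩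
  have hCne : ((insert u A)ᶜ).Nonempty := by
    refine ⟨e.symm (Sum.inr (Sum.inr ⟨0, ht⟩)), hCmem _ ?_ ?_⟩
    · intro h
      obtain ⟨i, hi⟩ := hmA _ h
      rw [RelIso.apply_symm_apply] at hi
      simp at hi
    · intro h
      have := congrArg e h
      rw [RelIso.apply_symm_apply, heu] at this
      simp at this
  refine conds3 huA hAne hCne ?_ ?_ ?_
  · -- dominating
    intro x hx y hyx
    obtain ⟨i, hi⟩ := hmA x hx
    refine e.map_rel_iff.mp ?_
    rcases h : e y with j | w
    · rw [hi, graphJoin_adj_ll, top_adj]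
      intro hij
      apply hyx
      apply e.injective
      rw [hi, h, hij]
    · rw [hi, graphJoin_adj_lr]
      trivial
  · -- clique on C
    intro x hx y hy hxy
    obtain ⟨hxA, hxu⟩ := hCmem' x hx
    obtain ⟨hyA, hyu⟩ := hCmem' y hy
    obtain ⟨j, hj⟩ := hmC x hxA hxu
    obtain ⟨j', hj'⟩ := hmC y hyA hyu
    refine e.map_rel_iff.mp ?_
    rw [hj, hj', graphJoin_adj_rr]
    have : ((⊤ : SimpleGraph (Fin 1)) ⊕g (⊤ : SimpleGraph (Fin t))).Adj
        (Sum.inr j) (Sum.inr j') ↔ j ≠ j' := by simp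
    rw [this]
    intro h
    apply hxy
    apply e.injective
    rw [hj, hj', h]
  · -- u not adjacent to C
    intro y hy hadj
    obtain ⟨hyA, hyu⟩ := hCmem' y hy
    obtain ⟨j, hj⟩ := hmC y hyA hyu
    have := e.map_rel_iff.mpr hadj
    rw [heu, hj, graphJoin_adj_rr] at this
    simp at this

end extract


/-- For a connected graph `G` of order `n ≥ 4` and integer `k ≥ 2`: `dimₖ(G) = n-2` iff
`G ≅ K_{s,t}` (`s,t ≥ 1`), `G ≅ K_s + K̄_t` (`s ≥ 1`, `t ≥ 2`), or
`G ≅ K_s + (K₁ ∪ K_t)` (`s,t ≥ 1`). -/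
theorem stmt5 {V : Type*} [Fintype V] (G : SimpleGraph V) (n : ℕ)
    (hn : Fintype.card V = n) (h4 : 4 ≤ n) (hG : G.Connected) (k : ℕ) (hk : 2 ≤ k) :
    dimK G k = n - 2 ↔
      ((∃ s t : ℕ, 1 ≤ s ∧ 1 ≤ t ∧
          Nonempty (G ≃g completeBipartiteGraph (Fin s) (Fin t))) ∨
       (∃ s t : ℕ, 1 ≤ s ∧ 2 ≤ t ∧
          Nonempty (G ≃g graphJoin (⊤ : SimpleGraph (Fin s)) (⊥ : SimpleGraph (Fin t)))) ∨
       (∃ s t : ℕ, 1 ≤ s ∧ 1 ≤ t ∧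
          Nonempty (G ≃g graphJoin (⊤ : SimpleGraph (Fin s))
            ((⊤ : SimpleGraph (Fin 1)) ⊕g (⊤ : SimpleGraph (Fin t)))))) := by
  have hcard3 : 3 ≤ Fintype.card V := by omega
  rw [dimK_eq_iff' hG hn h4 hk]
  constructor
  · rintro ⟨hd, hA, hB⟩
    rcases classify hG hd hA hB with h | h | h
    · exact Or.inl (iso1_of_P1 h)
    · exact Or.inr (Or.inl (iso2_of_P2 h))
    · exact Or.inr (Or.inr (iso3_of_P3 h))
  · rintro (⟨s, t, hs, ht, ⟨e⟩⟩ | ⟨s, t, hs, ht, ⟨e⟩⟩ | ⟨s, t, hs, ht, ⟨e⟩⟩)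
    · exact descr1 hs ht e (exists_three hcard3)
    · exact descr2 hs ht e
    · exact descr3 hs ht e
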